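/- Let V be a finite-dimensional real inner product space, W ⊆ V a subspace, and P_W : V → V the orthogonal projection onto W. Then for every n, the n-th exterior power map Λⁿ P_W : ΛⁿV → ΛⁿV is the orthogonal projection onto ΛⁿW, with respect to the inner product on ΛⁿV determined by ⟨v₁∧⋯∧vₙ, w₁∧⋯∧wₙ⟩ = det(⟨vᵢ,wⱼ⟩). -/

import Mathlib

/-- The n-th exterior power of a finite-dimensional real inner product space `V` is
presented abstractly as an inner product space `E` together with an alternating map
`ιM : V^n → E` whose image spans `E` and whose inner products are given by the Gram
determinant formula.  `ΛP` is the induced map `Λⁿ P_W` (characterized on generators),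
and `ΛⁿW` is the span of the wedges of vectors of `W`.  The theorem: `Λⁿ P_W` is the
orthogonal projection onto `ΛⁿW`. -/
theorem stmt_3 {V E : Type*}
    [NormedAddCommGroup V] [InnerProductSpace ℝ V] [FiniteDimensional ℝ V]
    [NormedAddCommGroup E] [InnerProductSpace ℝ E] [FiniteDimensional ℝ E]
    (n : ℕ) (ιM : V [⋀^Fin n]→ₗ[ℝ] E)
    (hspan : Submodule.span ℝ (Set.range fun v : Fin n → V => ιM v) = ⊤)
    (hGram : ∀ v w : Fin n → V,
      (inner ℝ (ιM v) (ιM w) : ℝ) =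
        Matrix.det (Matrix.of fun i j => (inner ℝ (v i) (w j) : ℝ)))
    (W : Submodule ℝ V)
    (P : V →ₗ[ℝ] V) (hP : P = W.subtype ∘ₗ W.orthogonalProjectionOnto.toLinearMap)
    (ΛP : E →ₗ[ℝ] E) (hΛP : ∀ v : Fin n → V, ΛP (ιM v) = ιM fun i => P (v i))
    (ΛW : Submodule ℝ E)
    (hΛW : ΛW = Submodule.span ℝ
      {x : E | ∃ v : Fin n → V, (∀ i, v i ∈ W) ∧ x = ιM v}) :
    ΛP = ΛW.subtype ∘ₗ ΛW.orthogonalProjectionOnto.toLinearMap := by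
  -- P maps into W
  have hPW : ∀ x : V, P x ∈ W := by
    intro x; rw [hP]; exact (W.orthogonalProjectionOnto x).2
  -- ⟪P x, w⟫ = ⟪x, w⟫ for w ∈ W
  have hPinner : ∀ (x w : V), w ∈ W → (inner ℝ (P x) w : ℝ) = inner ℝ x w := by
    intro x w hw
    have : (inner ℝ (x - (W.orthogonalProjectionOnto x : V)) w : ℝ) = 0 :=
      Submodule.starProjection_inner_eq_zero (K := W) x w hw
    rw [hP]
    simp only [LinearMap.coe_comp, Function.comp_apply, ContinuousLinearMap.coe_coe,
      Submodule.coe_subtype]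
    rw [inner_sub_left] at this
    linarith
  -- key orthogonality on generators
  have key : ∀ v u : Fin n → V, (∀ i, u i ∈ W) →
      (inner ℝ (ιM v - ΛP (ιM v)) (ιM u) : ℝ) = 0 := by
    intro v u hu
    rw [inner_sub_left, hΛP, hGram, hGram]
    have : (Matrix.of fun i j => (inner ℝ (v i) (u j) : ℝ)) =
        (Matrix.of fun i j => (inner ℝ (P (v i)) (u j) : ℝ)) := by
      ext i j
      simp [hPinner (v i) (u j) (hu j)]
    rw [this]; ring
  -- x - ΛP x is orthogonal to every element of ΛW
  have orth : ∀ x : E, ∀ w ∈ ΛW, (inner ℝ (x - ΛP x) w : ℝ) = 0 := by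
    -- first fix x a generator, then span-induct in w, then span-induct in x
    have step1 : ∀ v : Fin n → V, ∀ w ∈ ΛW, (inner ℝ (ιM v - ΛP (ιM v)) w : ℝ) = 0 := by
      intro v w hw
      rw [hΛW] at hw
      induction hw using Submodule.span_induction with
      | mem y hy => obtain ⟨u, hu, rfl⟩ := hy; exact key v u hu
      | zero => simp
      | add y z _ _ hy hz => rw [inner_add_right, hy, hz]; ring
      | smul c y _ hy => rw [inner_smul_right, hy]; ring
    intro x w hw
    have hx : x ∈ Submodule.span ℝ (Set.range fun v : Fin n → V => ιM v) := by
      rw [hspan]; trivial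
    induction hx using Submodule.span_induction with
    | mem y hy => obtain ⟨v, rfl⟩ := hy; exact step1 v w hw
    | zero => simp
    | add y z _ _ hy hz =>
      have : y + z - ΛP (y + z) = (y - ΛP y) + (z - ΛP z) := by
        rw [map_add]; abel
      rw [this, inner_add_left, hy, hz]; ring
    | smul c y _ hy =>
      have : c • y - ΛP (c • y) = c • (y - ΛP y) := by
        rw [map_smul, smul_sub]
      rw [this, inner_smul_left, hy]; ring
  -- ΛP x ∈ ΛW
  have mem : ∀ x : E, ΛP x ∈ ΛW := by
    intro x
    have hx : x ∈ Submodule.span ℝ (Set.range fun v : Fin n → V => ιM v) := by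
      rw [hspan]; trivial
    induction hx using Submodule.span_induction with
    | mem y hy =>
      obtain ⟨v, rfl⟩ := hy
      rw [hΛP, hΛW]
      exact Submodule.subset_span ⟨fun i => P (v i), fun i => hPW (v i), rfl⟩
    | zero => simp
    | add y z _ _ hy hz => rw [map_add]; exact ΛW.add_mem hy hz
    | smul c y _ hy => rw [map_smul]; exact ΛW.smul_mem c hy
  ext x
  simp only [LinearMap.coe_comp, Function.comp_apply, ContinuousLinearMap.coe_coe,
    Submodule.coe_subtype]
  exact (Submodule.eq_starProjection_of_mem_of_inner_eq_zero (mem x) (orth x)).symm
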